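/- Define the canonical higher Serre derivatives ∂_k^{[n]} on holomorphic functions on ℍ by ∂_k^{[0]} f = f, ∂_k^{[1]} f = D f - (k/12)E₂ f, and ∂_k^{[n+1]} f = ∂_{k+2n}(∂_k^{[n]} f) - (n(n+k-1)/144)·E₄·∂_k^{[n-1]} f for n ≥ 1. Then for any holomorphic f and all k, n ≥ 0: ∂_k^{[n]}(f) = Σ_{r=0}^n C(n,r)·(k+r)_{n-r}·(-E₂/12)^{n-r}·D^r(f). -/

import Mathlib

open Complex Finset

noncomputable section

/-- The normalized derivative `D = (2πi)⁻¹ d/dτ`. -/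
def Dop (f : ℂ → ℂ) : ℂ → ℂ := fun τ => (2 * ↑Real.pi * I)⁻¹ * deriv f τ

/-- Rising factorial `x (x+1) ⋯ (x+n-1)` for complex `x`. -/
def risingC (x : ℂ) (n : ℕ) : ℂ := ∏ i ∈ Finset.range n, (x + i)

/-- The canonical higher Serre derivatives: `∂_k^{[0]} f = f`, `∂_k^{[1]} f = Df - (k/12)E₂f`,
`∂_k^{[n+1]} f = ∂_{k+2n}(∂_k^{[n]} f) - (n(n+k-1)/144)·E₄·∂_k^{[n-1]} f`. -/
def higherSerre (E2 E4 : ℂ → ℂ) (k : ℂ) (f : ℂ → ℂ) : ℕ → ℂ → ℂ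
  | 0 => f
  | 1 => fun τ => Dop f τ - k / 12 * E2 τ * f τ
  | (n + 2) => fun τ =>
      (Dop (higherSerre E2 E4 k f (n + 1)) τ -
          (k + 2 * ((n : ℂ) + 1)) / 12 * E2 τ * higherSerre E2 E4 k f (n + 1) τ) -
        (((n : ℂ) + 1) * (((n : ℂ) + 1) + k - 1) / 144) * E4 τ *
          higherSerre E2 E4 k f n τ

/-! ### Auxiliary lemmas -/

lemma hUopen : IsOpen {z : ℂ | 0 < z.im} := isOpen_lt continuous_const Complex.continuous_im

lemma Dop_congr {g h : ℂ → ℂ} {τ : ℂ} (hτ : 0 < τ.im)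
    (heq : ∀ x, 0 < x.im → g x = h x) : Dop g τ = Dop h τ := by
  unfold Dop
  congr 1
  apply Filter.EventuallyEq.deriv_eq
  filter_upwards [hUopen.mem_nhds hτ] with x hx using heq x hx

lemma Dop_sum {s : Finset ℕ} {F : ℕ → ℂ → ℂ} {τ : ℂ}
    (h : ∀ i ∈ s, DifferentiableAt ℂ (F i) τ) :
    Dop (fun x => ∑ i ∈ s, F i x) τ = ∑ i ∈ s, Dop (F i) τ := by
  unfold Dop
  rw [deriv_fun_sum h, Finset.mul_sum]

lemma Dop_term {g h : ℂ → ℂ} {τ : ℂ} (a : ℂ) (m : ℕ)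
    (hg : DifferentiableAt ℂ g τ) (hh : DifferentiableAt ℂ h τ) :
    Dop (fun x => a * g x ^ m * h x) τ
      = a * ((m : ℂ) * g τ ^ (m - 1) * Dop g τ) * h τ + a * g τ ^ m * Dop h τ := by
  have h1 : DifferentiableAt ℂ (fun x => a * g x ^ m) τ := (hg.pow m).const_mul a
  unfold Dop
  rw [deriv_fun_mul h1 hh, deriv_const_mul a (d := fun x => g x ^ m) (hg.pow m),
    (by exact deriv_pow hg m : deriv (fun x => g x ^ m) τ = (m : ℂ) * g τ ^ (m - 1) * deriv g τ)]
  ring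

lemma diffOn_Dop {g : ℂ → ℂ} (hg : DifferentiableOn ℂ g {z : ℂ | 0 < z.im}) :
    DifferentiableOn ℂ (Dop g) {z : ℂ | 0 < z.im} := by
  have h := ((hg.analyticOnNhd hUopen).deriv).differentiableOn
  exact h.const_mul _

lemma diffOn_iter {f : ℂ → ℂ} (hf : DifferentiableOn ℂ f {z : ℂ | 0 < z.im}) :
    ∀ r, DifferentiableOn ℂ (Dop^[r] f) {z : ℂ | 0 < z.im}
  | 0 => hf
  | (r+1) => by
      rw [Function.iterate_succ_apply']
      exact diffOn_Dop (diffOn_iter hf r)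

lemma risingC_succ (x : ℂ) (n : ℕ) : risingC x (n+1) = risingC x n * (x + n) :=
  Finset.prod_range_succ _ _

lemma risingC_succ' (x : ℂ) (n : ℕ) : risingC x (n+1) = x * risingC (x+1) n := by
  unfold risingC
  rw [Finset.prod_range_succ']
  simp only [Nat.cast_zero, add_zero, Nat.cast_add, Nat.cast_one]
  rw [mul_comm]
  congr 1
  exact Finset.prod_congr rfl (fun i _ => by ring)

lemma keyL1 (x : ℂ) (n r : ℕ) (hr : r ≤ n) :
    ((n+1-r : ℕ) : ℂ) * (((n+1).choose r : ℕ) : ℂ) * risingC (x + r) (n+1-r)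
      = ((n : ℂ)+1) * (x + n) * ((n.choose r : ℕ) : ℂ) * risingC (x + r) (n-r) := by
  have h1 : n + 1 - r = (n - r) + 1 := by omega
  rw [h1, risingC_succ]
  have hnat : (n - r + 1) * ((n+1).choose r) = (n+1) * n.choose r := by
    rw [show n - r + 1 = n + 1 - r from by omega, mul_comm, ← Nat.choose_mul_succ_eq n r]
    ring
  have h3 : ((n - r + 1 : ℕ) : ℂ) * (((n+1).choose r : ℕ) : ℂ)
      = ((n:ℂ)+1) * ((n.choose r : ℕ) : ℂ) := by
    exact_mod_cast hnat
  push_cast [Nat.cast_sub hr] at h3 ⊢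
  linear_combination (x + (n:ℂ)) * risingC (x + ↑r) (n-r) * h3

lemma keyL2 (x : ℂ) (n r : ℕ) (hr : r ≤ n + 1) :
    (((n+1).choose r : ℕ) : ℂ) * risingC (x + r) (n+1-r)
      + (x + (n:ℂ) + 2 + r) * (((n+1).choose (r+1) : ℕ) : ℂ) * risingC (x + (r+1:ℕ)) (n+1-(r+1))
      = (((n+2).choose (r+1) : ℕ) : ℂ) * risingC (x + (r+1:ℕ)) (n+2-(r+1)) := by
  rcases eq_or_lt_of_le hr with h | h
  · subst h
    simp [Nat.choose_succ_self, Nat.choose_self, risingC]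
  · have hr' : r ≤ n := by omega
    have e1 : n + 1 - r = (n - r) + 1 := by omega
    have e2 : n + 1 - (r+1) = n - r := by omega
    have e3 : n + 2 - (r+1) = (n - r) + 1 := by omega
    have e4 : risingC (x + r) ((n-r)+1) = (x + r) * risingC (x + (r+1:ℕ)) (n-r) := by
      rw [risingC_succ']
      push_cast
      ring_nf
    rw [e1, e2, e3, e4, risingC_succ]
    have h1 : (((n+1).choose (r+1) : ℕ) : ℂ) * ((r:ℂ)+1)
        = (((n+1).choose r : ℕ) : ℂ) * ((n:ℂ)+1-r) := by
      have hc : (((n+1).choose (r+1) * (r+1) : ℕ) : ℂ) = (((n+1).choose r * (n+1-r) : ℕ) : ℂ) := by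
        exact_mod_cast Nat.choose_succ_right_eq (n+1) r
      push_cast [Nat.cast_sub (by omega : r ≤ n+1)] at hc
      linear_combination hc
    have h2 : (((n+2).choose (r+1) : ℕ) : ℂ)
        = (((n+1).choose r : ℕ) : ℂ) + (((n+1).choose (r+1) : ℕ) : ℂ) := by
      exact_mod_cast Nat.choose_succ_succ (n+1) r
    push_cast [Nat.cast_sub hr'] at h1 h2 ⊢
    linear_combination risingC (x + ((r:ℂ)+1)) (n-r) * h1
      - (x + (n:ℂ) + 1) * risingC (x + ((r:ℂ)+1)) (n-r) * h2

lemma algebra_key (x e2 e4 : ℂ) (F : ℕ → ℂ) (n : ℕ) :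
    (∑ r ∈ Finset.range (n+2),
        (((n+1).choose r : ℂ) * risingC (x + r) (n+1-r) *
            (((n+1-r : ℕ) : ℂ) * (-e2/12)^(n-r) * (e4/144 - (-e2/12)^2)) * F r
          + ((n+1).choose r : ℂ) * risingC (x + r) (n+1-r) * (-e2/12)^(n+1-r) * F (r+1)))
      - (x + 2*((n:ℂ)+1))/12 * e2 *
          (∑ r ∈ Finset.range (n+2), ((n+1).choose r : ℂ) * risingC (x + r) (n+1-r) * (-e2/12)^(n+1-r) * F r)
      - (((n:ℂ)+1) * (((n:ℂ)+1)+x-1)/144) * e4 *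
          (∑ r ∈ Finset.range (n+1), ((n.choose r : ℕ) : ℂ) * risingC (x + r) (n-r) * (-e2/12)^(n-r) * F r)
    = ∑ r ∈ Finset.range (n+3), (((n+2).choose r : ℕ) : ℂ) * risingC (x + r) (n+2-r) * (-e2/12)^(n+2-r) * F r := by
  set G : ℂ := -e2/12 with hG
  set W : ℂ := e4/144 with hW
  have he2 : e2 = -12 * G := by rw [hG]; ring
  have he4 : e4 = 144 * W := by rw [hW]; ring
  rw [he2, he4, Finset.sum_add_distrib]
  have hA : (∑ r ∈ Finset.range (n+2),
        ((n+1).choose r : ℂ) * risingC (x + r) (n+1-r) *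
          (((n+1-r : ℕ) : ℂ) * G^(n-r) * (W - G^2)) * F r)
      = (∑ r ∈ Finset.range (n+2),
          ((n+1).choose r : ℂ) * risingC (x + r) (n+1-r) * ((n+1-r : ℕ) : ℂ) * W * G^(n-r) * F r)
        - (∑ r ∈ Finset.range (n+2),
          ((n+1).choose r : ℂ) * risingC (x + r) (n+1-r) * ((n+1-r : ℕ) : ℂ) * G^(n+2-r) * F r) := by
    rw [← Finset.sum_sub_distrib]
    refine Finset.sum_congr rfl (fun r hr => ?_)
    rcases Nat.lt_or_ge r (n+1) with h | h
    · have e : n+2-r = (n-r)+2 := by omega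
      rw [e, pow_add]
      ring
    · have hr2 : r = n+1 := by simp only [Finset.mem_range] at hr; omega
      subst hr2
      simp [Nat.sub_self]
  have hmid : (x + 2*((n:ℂ)+1))/12 * (-12*G) *
        (∑ r ∈ Finset.range (n+2), ((n+1).choose r : ℂ) * risingC (x + r) (n+1-r) * G^(n+1-r) * F r)
      = - ∑ r ∈ Finset.range (n+2),
          ((n+1).choose r : ℂ) * risingC (x + r) (n+1-r) * (x + 2*(n:ℂ)+2) * G^(n+2-r) * F r := by
    rw [Finset.mul_sum, ← Finset.sum_neg_distrib]
    refine Finset.sum_congr rfl (fun r hr => ?_)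
    have e : n+2-r = (n+1-r)+1 := by
      simp only [Finset.mem_range] at hr; omega
    rw [e, pow_succ]
    ring
  have hE4 : (((n:ℂ)+1) * (((n:ℂ)+1)+x-1)/144) * (144*W) *
        (∑ r ∈ Finset.range (n+1), ((n.choose r : ℕ) : ℂ) * risingC (x + r) (n-r) * G^(n-r) * F r)
      = ∑ r ∈ Finset.range (n+2),
          ((n+1).choose r : ℂ) * risingC (x + r) (n+1-r) * ((n+1-r : ℕ) : ℂ) * W * G^(n-r) * F r := by
    rw [Finset.sum_range_succ (fun r => ((n+1).choose r : ℂ) * risingC (x + r) (n+1-r) * ((n+1-r : ℕ) : ℂ) * W * G^(n-r) * F r) (n+1)]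
    simp only [Nat.sub_self, Nat.cast_zero, mul_zero, zero_mul, add_zero]
    rw [Finset.mul_sum]
    refine Finset.sum_congr rfl (fun r hr => ?_)
    have hr' : r ≤ n := by simp only [Finset.mem_range] at hr; omega
    have h1 := keyL1 x n r hr'
    linear_combination (-(W * G^(n-r) * F r)) * h1
  rw [hA, hmid, ← hE4]
  have h6 : (∑ r ∈ Finset.range (n+2),
        ((n+1).choose r : ℂ) * risingC (x + r) (n+1-r) * (x + 2*(n:ℂ)+2) * G^(n+2-r) * F r)
      - (∑ r ∈ Finset.range (n+2),
        ((n+1).choose r : ℂ) * risingC (x + r) (n+1-r) * ((n+1-r : ℕ) : ℂ) * G^(n+2-r) * F r)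
      = ∑ r ∈ Finset.range (n+2),
          ((n+1).choose r : ℂ) * risingC (x + r) (n+1-r) * (x + (n:ℂ)+1+r) * G^(n+2-r) * F r := by
    rw [← Finset.sum_sub_distrib]
    refine Finset.sum_congr rfl (fun r hr => ?_)
    have hr' : r ≤ n+1 := by simp only [Finset.mem_range] at hr; omega
    have hc : ((n+1-r : ℕ) : ℂ) = (n:ℂ)+1-r := by
      push_cast [Nat.cast_sub hr']; ring
    rw [hc]; ring
  have hfin : (∑ r ∈ Finset.range (n+2),
        ((n+1).choose r : ℂ) * risingC (x + r) (n+1-r) * G^(n+1-r) * F (r+1))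
      + (∑ r ∈ Finset.range (n+2),
        ((n+1).choose r : ℂ) * risingC (x + r) (n+1-r) * (x + (n:ℂ)+1+r) * G^(n+2-r) * F r)
      = ∑ r ∈ Finset.range (n+3), (((n+2).choose r : ℕ) : ℂ) * risingC (x + r) (n+2-r) * G^(n+2-r) * F r := by
    rw [Finset.sum_range_succ' (fun r => (((n+2).choose r : ℕ) : ℂ) * risingC (x + r) (n+2-r) * G^(n+2-r) * F r) (n+2)]
    rw [Finset.sum_range_succ' (fun r => ((n+1).choose r : ℂ) * risingC (x + r) (n+1-r) * (x + (n:ℂ)+1+r) * G^(n+2-r) * F r) (n+1)]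
    have hext : (∑ r ∈ Finset.range (n+1),
          ((n+1).choose (r+1) : ℂ) * risingC (x + (r+1:ℕ)) (n+1-(r+1)) * (x + (n:ℂ)+1+(r+1:ℕ)) * G^(n+2-(r+1)) * F (r+1))
        = ∑ r ∈ Finset.range (n+2),
          ((n+1).choose (r+1) : ℂ) * risingC (x + (r+1:ℕ)) (n+1-(r+1)) * (x + (n:ℂ)+1+(r+1:ℕ)) * G^(n+2-(r+1)) * F (r+1) := by
      conv_rhs => rw [Finset.sum_range_succ]
      have hz : (((n+1).choose (n+1+1) : ℕ) : ℂ) = 0 := by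
        simp [Nat.choose_eq_zero_of_lt]
      rw [hz]
      ring
    rw [hext, ← add_assoc, ← Finset.sum_add_distrib]
    have hcongr : ∀ r ∈ Finset.range (n+2),
        ((n+1).choose r : ℂ) * risingC (x + r) (n+1-r) * G^(n+1-r) * F (r+1)
          + ((n+1).choose (r+1) : ℂ) * risingC (x + (r+1:ℕ)) (n+1-(r+1)) * (x + (n:ℂ)+1+(r+1:ℕ)) * G^(n+2-(r+1)) * F (r+1)
        = (((n+2).choose (r+1) : ℕ) : ℂ) * risingC (x + (r+1:ℕ)) (n+2-(r+1)) * G^(n+2-(r+1)) * F (r+1) := by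
      intro r hr
      have hr' : r ≤ n+1 := by simp only [Finset.mem_range] at hr; omega
      have e : n+2-(r+1) = n+1-r := by omega
      rw [e]
      have h2 := keyL2 x n r hr'
      push_cast at h2 ⊢
      linear_combination (G^(n+1-r) * F (r+1)) * h2
    rw [Finset.sum_congr rfl hcongr]
    have hhead : ((n+1).choose 0 : ℂ) * risingC (x + (0:ℕ)) (n+1-0) * (x + (n:ℂ)+1+(0:ℕ)) * G^(n+2-0) * F 0
        = (((n+2).choose 0 : ℕ) : ℂ) * risingC (x + (0:ℕ)) (n+2-0) * G^(n+2-0) * F 0 := by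
      simp only [Nat.choose_zero_right, Nat.cast_one, one_mul, Nat.cast_zero, add_zero,
        Nat.sub_zero]
      have h3 := risingC_succ x (n+1)
      push_cast at h3
      rw [h3]
      ring
    rw [hhead]
  linear_combination h6 + hfin

/-- The closed form. -/
def Sform (E2 f : ℂ → ℂ) (k : ℂ) (m : ℕ) : ℂ → ℂ := fun τ =>
  ∑ r ∈ Finset.range (m + 1),
    (m.choose r : ℂ) * risingC (k + (r : ℂ)) (m - r) * (-(E2 τ) / 12) ^ (m - r) * Dop^[r] f τ

lemma step_lemma (E2 E4 f : ℂ → ℂ)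
    (hE2 : DifferentiableOn ℂ E2 {z : ℂ | 0 < z.im})
    (hf : DifferentiableOn ℂ f {z : ℂ | 0 < z.im})
    (hram : ∀ τ : ℂ, 0 < τ.im → Dop E2 τ = (E2 τ ^ 2 - E4 τ) / 12)
    (k : ℂ) (n : ℕ)
    (ih1 : ∀ x, 0 < x.im → higherSerre E2 E4 k f n x = Sform E2 f k n x)
    (ih2 : ∀ x, 0 < x.im → higherSerre E2 E4 k f (n+1) x = Sform E2 f k (n+1) x) :
    ∀ τ, 0 < τ.im → higherSerre E2 E4 k f (n+2) τ = Sform E2 f k (n+2) τ := by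
  intro τ hτ
  have hmem := hUopen.mem_nhds hτ
  have hE2at : DifferentiableAt ℂ E2 τ := hE2.differentiableAt hmem
  have hgA : DifferentiableAt ℂ (fun x => -(E2 x) / 12) τ := hE2at.neg.div_const 12
  have hfr : ∀ r, DifferentiableAt ℂ (Dop^[r] f) τ :=
    fun r => (diffOn_iter hf r).differentiableAt hmem
  have hDg : Dop (fun x => -(E2 x) / 12) τ = E4 τ / 144 - (-(E2 τ) / 12) ^ 2 := by
    have hder : deriv (fun x => -(E2 x) / 12) τ = -(deriv E2 τ) / 12 := by
      rw [deriv_div_const, deriv.fun_neg]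
    have h0 : Dop (fun x => -(E2 x) / 12) τ = -(Dop E2 τ) / 12 := by
      unfold Dop
      rw [hder]
      ring
    rw [h0, hram τ hτ]
    ring
  have hterm : ∀ r ∈ Finset.range (n+2),
      Dop (fun x => ((n+1).choose r : ℂ) * risingC (k + (r : ℂ)) (n+1-r) * (-(E2 x) / 12) ^ (n+1-r) * Dop^[r] f x) τ
        = ((n+1).choose r : ℂ) * risingC (k + (r : ℂ)) (n+1-r) *
            (((n+1-r : ℕ) : ℂ) * (-(E2 τ) / 12) ^ (n-r) * (E4 τ / 144 - (-(E2 τ) / 12) ^ 2)) * Dop^[r] f τ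
          + ((n+1).choose r : ℂ) * risingC (k + (r : ℂ)) (n+1-r) * (-(E2 τ) / 12) ^ (n+1-r) * Dop^[r+1] f τ := by
    intro r hr
    have e : n + 1 - r - 1 = n - r := by omega
    rw [Dop_term _ _ hgA (hfr r), hDg, e, ← Function.iterate_succ_apply' Dop r f]
  have hdiff : ∀ r ∈ Finset.range (n+2), DifferentiableAt ℂ
      (fun x => ((n+1).choose r : ℂ) * risingC (k + (r : ℂ)) (n+1-r) * (-(E2 x) / 12) ^ (n+1-r) * Dop^[r] f x) τ :=
    fun r _ => ((hgA.pow _).const_mul _).mul (hfr r)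
  have hDS : Dop (Sform E2 f k (n+1)) τ = ∑ r ∈ Finset.range (n+2),
      (((n+1).choose r : ℂ) * risingC (k + (r : ℂ)) (n+1-r) *
          (((n+1-r : ℕ) : ℂ) * (-(E2 τ) / 12) ^ (n-r) * (E4 τ / 144 - (-(E2 τ) / 12) ^ 2)) * Dop^[r] f τ
        + ((n+1).choose r : ℂ) * risingC (k + (r : ℂ)) (n+1-r) * (-(E2 τ) / 12) ^ (n+1-r) * Dop^[r+1] f τ) :=
    (Dop_sum hdiff).trans (Finset.sum_congr rfl hterm)
  have hfin : Dop (higherSerre E2 E4 k f (n+1)) τ = ∑ r ∈ Finset.range (n+2),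
      (((n+1).choose r : ℂ) * risingC (k + (r : ℂ)) (n+1-r) *
          (((n+1-r : ℕ) : ℂ) * (-(E2 τ) / 12) ^ (n-r) * (E4 τ / 144 - (-(E2 τ) / 12) ^ 2)) * Dop^[r] f τ
        + ((n+1).choose r : ℂ) * risingC (k + (r : ℂ)) (n+1-r) * (-(E2 τ) / 12) ^ (n+1-r) * Dop^[r+1] f τ) :=
    (Dop_congr hτ ih2).trans hDS
  simp only [higherSerre]
  rw [hfin, ih2 τ hτ, ih1 τ hτ]
  exact algebra_key k (E2 τ) (E4 τ) (fun r => Dop^[r] f τ) n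

/-- For any holomorphic `f` on `ℍ` and all `k, n ≥ 0`:
`∂_k^{[n]}(f) = Σ_{r=0}^n C(n,r)·(k+r)_{n-r}·(-E₂/12)^{n-r}·D^r(f)`, where `E₂, E₄` satisfy
Ramanujan's identity `D(E₂) = (E₂² - E₄)/12` on `ℍ`. -/
theorem statement16 (E2 E4 f : ℂ → ℂ)
    (hE2 : DifferentiableOn ℂ E2 {z : ℂ | 0 < z.im})
    (hE4 : DifferentiableOn ℂ E4 {z : ℂ | 0 < z.im})
    (hf : DifferentiableOn ℂ f {z : ℂ | 0 < z.im})
    (hram : ∀ τ : ℂ, 0 < τ.im → Dop E2 τ = (E2 τ ^ 2 - E4 τ) / 12)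
    (k n : ℕ) (τ : ℂ) (hτ : 0 < τ.im) :
    higherSerre E2 E4 (k : ℂ) f n τ =
      ∑ r ∈ Finset.range (n + 1),
        (n.choose r : ℂ) * risingC ((k : ℂ) + (r : ℂ)) (n - r) *
          (-(E2 τ) / 12) ^ (n - r) * Dop^[r] f τ := by
  suffices h : ∀ m, ∀ x : ℂ, 0 < x.im → higherSerre E2 E4 (k : ℂ) f m x = Sform E2 f (k : ℂ) m x by
    exact h n τ hτ
  intro m
  induction m using Nat.twoStepInduction with
  | zero =>
    intro x hx
    simp [higherSerre, Sform, risingC]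
  | one =>
    intro x hx
    simp only [higherSerre, Sform]
    rw [Finset.sum_range_succ, Finset.sum_range_succ, Finset.sum_range_zero]
    simp [risingC]
    ring
  | more m ih1 ih2 =>
    exact step_lemma E2 E4 f hE2 hf hram (k : ℂ) m ih1 ih2
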